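/- Let A be a bounded self-adjoint positive semidefinite operator on a Hilbert space H and ω ≥ 0. If f ∈ H satisfies ‖A^k f‖ ≤ ω^k‖f‖ for all k ∈ ℕ, then the spectral projection of A onto the interval (ω, ∞) applied to f is zero, i.e. f lies in the range of the spectral projection onto [0, ω]. -/

import Mathlib

open RCLike ContinuousLinearMap

/-- The range of the spectral projection of a (positive self-adjoint) operator `A`
onto `[0, ω]` (equivalently, `(-∞, ω]`): the set of vectors annihilated by `g(A)`
for every continuous function `g` vanishing on `(-∞, ω]`, i.e. the vectors on which
the spectral projection onto `(ω, ∞)` vanishes. -/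
def specSubspace {H : Type*} [NormedAddCommGroup H] [InnerProductSpace ℂ H] [CompleteSpace H]
    (A : H →L[ℂ] H) (ω : ℝ) : Set H :=
  {f | ∀ g : ℝ → ℝ, Continuous g → (∀ x ≤ ω, g x = 0) → cfc g A f = 0}

lemma aux_norm_sq_eq {H : Type*} [NormedAddCommGroup H] [InnerProductSpace ℂ H]
    [CompleteSpace H] (T : H →L[ℂ] H) (hT : IsSelfAdjoint T) (f : H) :
    ‖T f‖ ^ 2 = re (inner ℂ ((T * T) f) f : ℂ) := by
  have h1 : (inner ℂ ((T * T) f) f : ℂ) = inner ℂ (T f) (T f) := by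
    rw [ContinuousLinearMap.mul_apply]
    exact hT.isSymmetric (T f) f
  rw [h1, inner_self_eq_norm_sq]

set_option maxHeartbeats 1000000 in
/-- If `A` is a bounded self-adjoint positive semidefinite operator on a complex
Hilbert space, `ω ≥ 0`, and `f` satisfies `‖A^k f‖ ≤ ω^k ‖f‖` for all `k ∈ ℕ`, then the
spectral projection of `A` onto `(ω, ∞)` applied to `f` is zero, i.e. `f` lies in the range
of the spectral projection onto `[0, ω]`. -/
theorem stmt_2 {H : Type*} [NormedAddCommGroup H] [InnerProductSpace ℂ H] [CompleteSpace H]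
    (A : H →L[ℂ] H) (hA : A.IsPositive) (ω : ℝ) (hω : 0 ≤ ω) (f : H)
    (hf : ∀ k : ℕ, ‖(A ^ k) f‖ ≤ ω ^ k * ‖f‖) : f ∈ specSubspace A ω := by
  simp only [specSubspace, Set.mem_setOf_eq]
  intro g hgc hg0
  rcases subsingleton_or_nontrivial H with hsub | hnt
  · exact Subsingleton.elim _ _
  have hsa : IsSelfAdjoint A := hA.isSelfAdjoint
  -- spectrum of A is contained in [0, ‖A‖]
  have hspec_nonneg : ∀ x ∈ spectrum ℝ A, 0 ≤ x :=
    SpectrumRestricts.nnreal_iff.mp hA.spectrumRestricts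
  have hspec_le : ∀ x ∈ spectrum ℝ A, x ≤ ‖A‖ := fun x hx =>
    le_trans (le_abs_self x) (Real.norm_eq_abs x ▸ spectrum.norm_le_norm_of_mem hx)
  -- a uniform bound for g on [0, ‖A‖]
  obtain ⟨M, hM⟩ : ∃ M, ∀ x ∈ Set.Icc (0 : ℝ) ‖A‖, |g x| ≤ M := by
    obtain ⟨M, hM⟩ := isCompact_Icc.exists_bound_of_continuousOn
      (f := g) hgc.continuousOn
    exact ⟨M, fun x hx => by simpa [Real.norm_eq_abs] using hM x hx⟩
  -- key estimate
  have key : ∀ c : ℝ, 0 < c → ‖cfc g A f‖ ^ 2 ≤ 2 * c * (‖f‖ ^ 2 + 1) := by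
    intro c hc
    -- choose δ from continuity of g² at ω, where g ω = 0
    have hcont : ContinuousAt (fun x => g x ^ 2) ω := (hgc.pow 2).continuousAt
    have hgω : g ω = 0 := hg0 ω le_rfl
    obtain ⟨δ, hδpos, hδ⟩ := Metric.continuousAt_iff.mp hcont c hc
    set b : ℝ := ω + δ / 2 with hb_def
    have hb_pos : 0 < b := by rw [hb_def]; linarith
    have hωb : ω < b := by rw [hb_def]; linarith
    -- choose k with M^2 * ((ω/b)^2)^k < c
    set r : ℝ := (ω / b) ^ 2 with hr_def
    have hr0 : 0 ≤ r := sq_nonneg _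
    have hr1 : r < 1 := by
      have h1 : ω / b < 1 := (div_lt_one hb_pos).mpr hωb
      have h0 : 0 ≤ ω / b := by positivity
      rw [hr_def]; nlinarith
    obtain ⟨k, hk⟩ : ∃ k : ℕ, (M ^ 2 + 1) * r ^ k < c := by
      obtain ⟨k, hk⟩ := exists_pow_lt_of_lt_one
        (show (0:ℝ) < c / (M ^ 2 + 1) by positivity) hr1
      refine ⟨k, ?_⟩
      have hM1 : (0:ℝ) < M ^ 2 + 1 := by positivity
      calc (M ^ 2 + 1) * r ^ k < (M ^ 2 + 1) * (c / (M ^ 2 + 1)) :=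
            mul_lt_mul_of_pos_left hk hM1
        _ = c := by field_simp
    set d : ℝ := M ^ 2 / b ^ (2 * k) with hd_def
    have hd0 : 0 ≤ d := by positivity
    set h : ℝ → ℝ := fun x => c + d * x ^ (2 * k) with hh_def
    have hM0 : 0 ≤ M := le_trans (abs_nonneg _) (hM 0 ⟨le_rfl, norm_nonneg _⟩)
    have hhc : Continuous h := by
      rw [hh_def]; exact continuous_const.add (continuous_const.mul (continuous_pow (2 * k)))
    -- pointwise bound on the spectrum
    have hpt : ∀ x ∈ spectrum ℝ A, g x ^ 2 ≤ h x := by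
      intro x hx
      have hx0 : 0 ≤ x := hspec_nonneg x hx
      have hxR : x ≤ ‖A‖ := hspec_le x hx
      have hterm : 0 ≤ d * x ^ (2 * k) := by positivity
      rcases le_or_gt x ω with hxω | hxω
      · rw [hg0 x hxω]
        simp only [hh_def]
        nlinarith
      · rcases le_or_gt x b with hxb | hxb
        · have hxb' : x ≤ ω + δ / 2 := hb_def ▸ hxb
          have hdist : dist x ω < δ := by
            rw [Real.dist_eq, abs_of_nonneg (by linarith)]
            linarith
          have h1 := hδ hdist
          have h2 : |g x ^ 2| < c := by simpa [hgω, Real.dist_eq] using h1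
          have h3 : g x ^ 2 < c := lt_of_abs_lt h2
          simp only [hh_def]
          linarith
        · have hgx : |g x| ≤ M := hM x ⟨hx0, hxR⟩
          have hgx2 : g x ^ 2 ≤ M ^ 2 := by nlinarith [abs_nonneg (g x), sq_abs (g x)]
          have hbx : b ^ (2 * k) ≤ x ^ (2 * k) :=
            pow_le_pow_left₀ hb_pos.le hxb.le _
          have hMd : M ^ 2 ≤ d * x ^ (2 * k) := by
            rw [hd_def, div_mul_eq_mul_div, le_div_iff₀ (by positivity)]
            nlinarith [pow_pos hb_pos (2 * k)]
          simp only [hh_def]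
          linarith
    -- operator inequality via cfc_mono
    have hmono : cfc (fun x => g x ^ 2) A ≤ cfc h A :=
      cfc_mono hpt (hgc.pow 2).continuousOn hhc.continuousOn
    have hposdiff : (cfc h A - cfc (fun x => g x ^ 2) A).IsPositive :=
      (ContinuousLinearMap.le_def _ _).mp hmono
    have hineq : re (inner ℂ (cfc (fun x => g x ^ 2) A f) f : ℂ)
        ≤ re (inner ℂ (cfc h A f) f : ℂ) := by
      have h1 := hposdiff.re_inner_nonneg_left f
      rw [ContinuousLinearMap.sub_apply, inner_sub_left, map_sub] at h1
      linarith
    -- compute the left side: ‖cfc g A f‖²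
    have hTsa : IsSelfAdjoint (cfc g A) := by
      rw [isSelfAdjoint_iff, ← cfc_star g A]
      simp
    have hleft : ‖cfc g A f‖ ^ 2 = re (inner ℂ (cfc (fun x => g x ^ 2) A f) f : ℂ) := by
      rw [cfc_pow g 2 A hgc.continuousOn hsa, aux_norm_sq_eq (cfc g A) hTsa f, sq]
    -- compute the right side
    have hcfc_h : cfc h A = algebraMap ℝ (H →L[ℂ] H) c + d • A ^ (2 * k) := by
      rw [hh_def]
      rw [cfc_const_add c (fun x => d * x ^ (2 * k)) A
        ((continuous_const.mul (continuous_pow (2 * k))).continuousOn) hsa,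
        cfc_const_mul d (fun x => x ^ (2 * k)) A (continuous_pow (2 * k)).continuousOn,
        cfc_pow_id A (2 * k) hsa]
    have hApow : re (inner ℂ ((A ^ (2 * k)) f) f : ℂ) = ‖(A ^ k) f‖ ^ 2 := by
      have h2k : A ^ (2 * k) = A ^ k * A ^ k := by rw [← pow_add, two_mul]
      rw [h2k, ← aux_norm_sq_eq (A ^ k) (hsa.pow k) f]
    have hright : re (inner ℂ (cfc h A f) f : ℂ) = c * ‖f‖ ^ 2 + d * ‖(A ^ k) f‖ ^ 2 := by
      rw [hcfc_h]
      rw [ContinuousLinearMap.add_apply, inner_add_left, map_add]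
      congr 1
      · have halg : (algebraMap ℝ (H →L[ℂ] H) c) f = (c : ℝ) • f := by
          rw [Algebra.algebraMap_eq_smul_one]
          simp
        rw [halg, real_smul_eq_coe_smul (K := ℂ), inner_smul_left, RCLike.conj_ofReal,
          re_ofReal_mul, inner_self_eq_norm_sq]
      · rw [ContinuousLinearMap.smul_apply, real_smul_eq_coe_smul (K := ℂ),
          inner_smul_left, RCLike.conj_ofReal, re_ofReal_mul, hApow]
    -- assemble
    have hAk : ‖(A ^ k) f‖ ^ 2 ≤ ω ^ (2 * k) * ‖f‖ ^ 2 := by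
      have h2 : ω ^ (2 * k) * ‖f‖ ^ 2 = (ω ^ k * ‖f‖) ^ 2 := by
        rw [mul_pow, ← pow_mul, mul_comm k 2]
      rw [h2]
      exact pow_le_pow_left₀ (norm_nonneg _) (hf k) 2
    have hd_bound : d * (ω ^ (2 * k) * ‖f‖ ^ 2) ≤ c * ‖f‖ ^ 2 := by
      have hrk : d * ω ^ (2 * k) = M ^ 2 * r ^ k := by
        rw [hr_def, ← pow_mul, div_pow, hd_def]
        ring
      have h1 : M ^ 2 * r ^ k ≤ (M ^ 2 + 1) * r ^ k := by
        have := pow_nonneg hr0 k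
        nlinarith
      have h2 : M ^ 2 * r ^ k ≤ c := le_trans h1 hk.le
      calc d * (ω ^ (2 * k) * ‖f‖ ^ 2) = (d * ω ^ (2 * k)) * ‖f‖ ^ 2 := by ring
        _ = (M ^ 2 * r ^ k) * ‖f‖ ^ 2 := by rw [hrk]
        _ ≤ c * ‖f‖ ^ 2 := by nlinarith [sq_nonneg ‖f‖]
    calc ‖cfc g A f‖ ^ 2 = re (inner ℂ (cfc (fun x => g x ^ 2) A f) f : ℂ) := hleft
      _ ≤ re (inner ℂ (cfc h A f) f : ℂ) := hineq
      _ = c * ‖f‖ ^ 2 + d * ‖(A ^ k) f‖ ^ 2 := hright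
      _ ≤ c * ‖f‖ ^ 2 + d * (ω ^ (2 * k) * ‖f‖ ^ 2) := by nlinarith [hAk, hd0]
      _ ≤ c * ‖f‖ ^ 2 + c * ‖f‖ ^ 2 := by linarith [hd_bound]
      _ ≤ 2 * c * (‖f‖ ^ 2 + 1) := by nlinarith [hc, sq_nonneg ‖f‖]
  -- conclude
  have h0 : ‖cfc g A f‖ ^ 2 ≤ 0 := by
    by_contra hlt
    push_neg at hlt
    have hc : 0 < ‖cfc g A f‖ ^ 2 / (4 * (‖f‖ ^ 2 + 1)) := by positivity
    have hkey := key _ hc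
    have hpos : (0:ℝ) < ‖f‖ ^ 2 + 1 := by positivity
    have heq : 2 * (‖cfc g A f‖ ^ 2 / (4 * (‖f‖ ^ 2 + 1))) * (‖f‖ ^ 2 + 1)
        = ‖cfc g A f‖ ^ 2 / 2 := by
      field_simp
      ring
    rw [heq] at hkey
    linarith
  have hnorm : ‖cfc g A f‖ = 0 := by nlinarith [norm_nonneg (cfc g A f)]
  exact norm_eq_zero.mp hnorm
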